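/- arXiv:2211.12474 — 2 statements merged into one kernel-verified Lean document; each statement's English description precedes it below -/
import Mathlib

section
/- Let Ω = (0,b) and let u ∈ H¹_ρ(Ω) (with weight ρ(x) = x) satisfy the nonlocal condition ∫₀ᵇ x u(x) dx = 0. Then ‖u‖²_{L²_ρ(Ω)} ≤ (b²/4) ‖uₓ‖²_{L²_ρ(Ω)}. -/
open MeasureTheory intervalIntegral

private lemma amgm_div (K a w : ℝ) (hK : 0 < K) : |a * w| ≤ (K * a ^ 2 + w ^ 2 / K) / 2 := by
  have e1 : (K * a ^ 2 + w ^ 2 / K) / 2 + a * w = (K * a + w) ^ 2 / (2 * K) := by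
    field_simp; ring
  have e2 : (K * a ^ 2 + w ^ 2 / K) / 2 - a * w = (K * a - w) ^ 2 / (2 * K) := by
    field_simp; ring
  have h1 : 0 ≤ (K * a + w) ^ 2 / (2 * K) := by positivity
  have h2 : 0 ≤ (K * a - w) ^ 2 / (2 * K) := by positivity
  rw [abs_le]
  constructor <;> linarith

/-- Weighted Poincaré inequality: if `u ∈ H¹_ρ((0,b))` with weight `ρ(x) = x`
(represented by a derivative `u'` with `HasDerivAt`, both weighted square-integrable)
satisfies the nonlocal condition `∫₀ᵇ x u(x) dx = 0`, then
`∫₀ᵇ x u² dx ≤ (b²/4) ∫₀ᵇ x (u')² dx`. -/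
theorem weighted_poincare (b : ℝ) (hb : 0 < b) (u u' : ℝ → ℝ)
    (hderiv : ∀ x ∈ Set.Icc (0:ℝ) b, HasDerivAt u (u' x) x)
    (hu2 : IntervalIntegrable (fun x => x * u x ^ 2) volume 0 b)
    (hu'2 : IntervalIntegrable (fun x => x * u' x ^ 2) volume 0 b)
    (hmean : (∫ x in (0:ℝ)..b, x * u x) = 0) :
    (∫ x in (0:ℝ)..b, x * u x ^ 2) ≤ b ^ 2 / 4 * ∫ x in (0:ℝ)..b, x * u' x ^ 2 := by
  have hb0 : (0:ℝ) ≤ b := hb.le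
  set I := ∫ x in (0:ℝ)..b, x * u x ^ 2 with hI
  set J := ∫ x in (0:ℝ)..b, x * u' x ^ 2 with hJ
  have hucont : ∀ x ∈ Set.Icc (0:ℝ) b, ContinuousAt u x := fun x hx => (hderiv x hx).continuousAt
  have hucOn : ContinuousOn u (Set.Icc 0 b) := fun x hx => (hucont x hx).continuousWithinAt
  have hfcont : ContinuousOn (fun t => t * u t) (Set.Icc 0 b) := continuousOn_id.mul hucOn
  have hsub : ∀ x ∈ Set.Icc (0:ℝ) b, Set.uIcc (0:ℝ) x ⊆ Set.uIcc (0:ℝ) b := by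
    intro x hx
    rw [Set.uIcc_of_le hx.1, Set.uIcc_of_le hb0]
    exact Set.Icc_subset_Icc le_rfl hx.2
  have hfint : ∀ x ∈ Set.Icc (0:ℝ) b, IntervalIntegrable (fun t => t * u t) volume 0 x := by
    intro x hx
    apply ContinuousOn.intervalIntegrable
    apply hfcont.mono
    rw [← Set.uIcc_of_le hb0]
    exact hsub x hx
  have hsqint : ∀ x ∈ Set.Icc (0:ℝ) b, IntervalIntegrable (fun t => t * u t ^ 2) volume 0 x :=
    fun x hx => hu2.mono_set (hsub x hx)
  set v : ℝ → ℝ := fun x => ∫ t in (0:ℝ)..x, t * u t with hv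
  have hv0 : v 0 = 0 := intervalIntegral.integral_same
  have hvb : v b = 0 := hmean
  have hvcont : ContinuousOn v (Set.Icc 0 b) := by
    have h := intervalIntegral.continuousOn_primitive_interval'
      (hfint b (Set.right_mem_Icc.mpr hb0)) Set.left_mem_uIcc
    rwa [Set.uIcc_of_le hb0] at h
  have hvd : ∀ x ∈ Set.Ioo (0:ℝ) b, HasDerivAt v (x * u x) x := by
    intro x hx
    exact intervalIntegral.integral_hasDerivAt_right
      (hfint x (Set.Ioo_subset_Icc_self hx))
      ((hfcont.mono Set.Ioo_subset_Icc_self).stronglyMeasurableAtFilter isOpen_Ioo x hx)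
      (hfcont.continuousAt (Icc_mem_nhds hx.1 hx.2))
  have hI0 : 0 ≤ I :=
    intervalIntegral.integral_nonneg hb0 (fun x hx => mul_nonneg hx.1 (sq_nonneg _))
  have hJ0 : 0 ≤ J :=
    intervalIntegral.integral_nonneg hb0 (fun x hx => mul_nonneg hx.1 (sq_nonneg _))
  have hIx : ∀ x ∈ Set.Icc (0:ℝ) b, (∫ t in (0:ℝ)..x, t * u t ^ 2) ≤ I := by
    intro x hx
    have h2 : IntervalIntegrable (fun t => t * u t ^ 2) volume x b := by
      apply hu2.mono_set
      rw [Set.uIcc_of_le hx.2, Set.uIcc_of_le hb0]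
      exact Set.Icc_subset_Icc hx.1 le_rfl
    have hadd := intervalIntegral.integral_add_adjacent_intervals (hsqint x hx) h2
    have hpos : 0 ≤ ∫ t in x..b, t * u t ^ 2 :=
      intervalIntegral.integral_nonneg hx.2
        (fun t ht => mul_nonneg (le_trans hx.1 ht.1) (sq_nonneg _))
    rw [hI]
    linarith
  -- key pointwise estimate on the primitive
  have hkey : ∀ x ∈ Set.Icc (0:ℝ) b, ∀ l : ℝ, 0 < l →
      |v x| ≤ l * x ^ 2 / 4 + I / (2 * l) := by
    intro x hx l hl
    have hIxv : (∫ t in (0:ℝ)..x, t * u t ^ 2) ≤ I := hIx x hx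
    have hlinint : IntervalIntegrable (fun t : ℝ => l * t / 2) volume 0 x :=
      ((continuous_const.mul continuous_id).div_const 2).intervalIntegrable _ _
    have hgint : IntervalIntegrable (fun t => l * t / 2 + t * u t ^ 2 / (2 * l)) volume 0 x :=
      hlinint.add ((hsqint x hx).div_const _)
    have h2 : (∫ t in (0:ℝ)..x, (l * t / 2 + t * u t ^ 2 / (2 * l)))
        = l * x ^ 2 / 4 + (∫ t in (0:ℝ)..x, t * u t ^ 2) / (2 * l) := by
      rw [intervalIntegral.integral_add hlinint ((hsqint x hx).div_const _)]
      congr 1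
      · rw [intervalIntegral.integral_div, intervalIntegral.integral_const_mul, integral_id]
        ring
      · rw [intervalIntegral.integral_div]
    have hfrac : (∫ t in (0:ℝ)..x, t * u t ^ 2) / (2 * l) ≤ I / (2 * l) := by
      gcongr
    have hup : v x ≤ l * x ^ 2 / 4 + I / (2 * l) := by
      have h1 : v x ≤ ∫ t in (0:ℝ)..x, (l * t / 2 + t * u t ^ 2 / (2 * l)) := by
        apply intervalIntegral.integral_mono_on hx.1 (hfint x hx) hgint
        intro t ht
        have heq : l * t / 2 + t * u t ^ 2 / (2 * l) - t * u t = t * (l - u t) ^ 2 / (2 * l) := by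
          field_simp; ring
        have hpos : 0 ≤ t * (l - u t) ^ 2 / (2 * l) :=
          div_nonneg (mul_nonneg ht.1 (sq_nonneg _)) (by linarith)
        linarith
      rw [h2] at h1
      linarith
    have hdown : -(l * x ^ 2 / 4 + I / (2 * l)) ≤ v x := by
      have h1 : (∫ t in (0:ℝ)..x, (-(l * t / 2 + t * u t ^ 2 / (2 * l)))) ≤ v x := by
        apply intervalIntegral.integral_mono_on hx.1 hgint.neg (hfint x hx)
        intro t ht
        simp only [Pi.neg_apply]
        have heq : l * t / 2 + t * u t ^ 2 / (2 * l) + t * u t = t * (l + u t) ^ 2 / (2 * l) := by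
          field_simp; ring
        have hpos : 0 ≤ t * (l + u t) ^ 2 / (2 * l) :=
          div_nonneg (mul_nonneg ht.1 (sq_nonneg _)) (by linarith)
        linarith
      rw [intervalIntegral.integral_neg, h2] at h1
      linarith
    exact abs_le.mpr ⟨hdown, hup⟩
  -- the quadratic bound on v
  have hB : ∀ x ∈ Set.Icc (0:ℝ) b, v x ^ 2 ≤ x ^ 2 * I / 2 := by
    intro x hx
    rcases eq_or_lt_of_le hx.1 with hx0 | hx0
    · rw [← hx0, hv0]
      norm_num
    rcases eq_or_lt_of_le hI0 with hI0' | hI0'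
    · -- I = 0
      have habs : v x = 0 := by
        by_contra hne
        have hvpos : 0 < |v x| := abs_pos.mpr hne
        have hl : 0 < 2 * |v x| / x ^ 2 := by positivity
        have hk := hkey x hx _ hl
        rw [← hI0'] at hk
        have : (2 * |v x| / x ^ 2) * x ^ 2 / 4 + 0 / (2 * (2 * |v x| / x ^ 2)) = |v x| / 2 := by
          field_simp
          ring
        rw [this] at hk
        linarith
      rw [habs, ← hI0']
      norm_num
    · -- I > 0
      set s := Real.sqrt (2 * I) with hs
      have hs0 : 0 < s := Real.sqrt_pos.mpr (by linarith)
      have hs2 : s ^ 2 = 2 * I := Real.sq_sqrt (by linarith)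
      have hl : 0 < s / x := by positivity
      have hk := hkey x hx _ hl
      have heq : (s / x) * x ^ 2 / 4 + I / (2 * (s / x)) = x * s / 2 := by
        have hIs : I = s ^ 2 / 2 := by linarith
        rw [hIs]
        field_simp
        ring
      rw [heq] at hk
      have h1 : -(x * s / 2) ≤ v x := by
        have := neg_abs_le (v x); linarith
      have h2 : v x ≤ x * s / 2 := le_trans (le_abs_self _) hk
      have h3 : v x ^ 2 ≤ (x * s / 2) ^ 2 := sq_le_sq' h1 h2
      calc v x ^ 2 ≤ (x * s / 2) ^ 2 := h3
        _ = x ^ 2 * I / 2 := by rw [div_pow, mul_pow, hs2]; ring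
  set c : ℝ := b ^ 2 / 4 with hc
  have hc0 : 0 < c := by positivity
  set g : ℝ → ℝ := fun x => (c * (x * u' x ^ 2) + I / (2 * c) * x) / 2 with hg
  have hlin2 : IntervalIntegrable (fun x : ℝ => I / (2 * c) * x) volume 0 b :=
    (continuous_const.mul continuous_id).intervalIntegrable _ _
  have hgint : IntervalIntegrable g volume 0 b :=
    ((hu'2.const_mul c).add hlin2).div_const _
  have hbound : ∀ x ∈ Set.Icc (0:ℝ) b, |u' x * v x| ≤ g x := by
    intro x hx
    rcases eq_or_lt_of_le hx.1 with hx0 | hx0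
    · rw [← hx0]
      simp [hg, hv0]
    · have h1 := amgm_div (c * x) (u' x) (v x) (by positivity)
      have h2 : v x ^ 2 / (c * x) ≤ I / (2 * c) * x := by
        rw [div_le_iff₀ (by positivity)]
        calc v x ^ 2 ≤ x ^ 2 * I / 2 := hB x hx
          _ = I / (2 * c) * x * (c * x) := by field_simp
      have h3 : c * x * u' x ^ 2 = c * (x * u' x ^ 2) := by ring
      calc |u' x * v x| ≤ (c * x * u' x ^ 2 + v x ^ 2 / (c * x)) / 2 := h1
        _ ≤ g x := by rw [hg]; dsimp only; rw [← h3]; linarith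
  have hu'v_int : IntervalIntegrable (fun x => u' x * v x) volume 0 b := by
    rw [intervalIntegrable_iff_integrableOn_Ioc_of_le hb0]
    have hbne : ∀ᵐ x ∂(volume : Measure ℝ), x ≠ b := by
      rw [MeasureTheory.ae_iff]
      have : {x : ℝ | ¬ x ≠ b} = {b} := by ext y; simp
      rw [this]
      exact measure_singleton b
    have hmeas : AEStronglyMeasurable (fun x => u' x * v x) (volume.restrict (Set.Ioc 0 b)) := by
      have h1 : AEStronglyMeasurable (fun x => deriv u x * v x)
          (volume.restrict (Set.Ioc 0 b)) :=
        (measurable_deriv u).aestronglyMeasurable.mul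
          ((hvcont.mono Set.Ioc_subset_Icc_self).aestronglyMeasurable measurableSet_Ioc)
      apply h1.congr
      filter_upwards [ae_restrict_mem measurableSet_Ioc, ae_restrict_of_ae hbne] with x hx hxb
      have hxo : x ∈ Set.Icc (0:ℝ) b := ⟨hx.1.le, hx.2⟩
      rw [(hderiv x hxo).deriv]
    have hgon : IntegrableOn g (Set.Ioc 0 b) volume := by
      rw [← intervalIntegrable_iff_integrableOn_Ioc_of_le hb0]
      exact hgint
    apply hgon.mono' hmeas
    filter_upwards [ae_restrict_mem measurableSet_Ioc] with x hx
    calc ‖u' x * v x‖ = |u' x * v x| := Real.norm_eq_abs _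
      _ ≤ g x := hbound x ⟨hx.1.le, hx.2⟩
  -- integration by parts
  have hxuuint : IntervalIntegrable (fun x => u x * (x * u x)) volume 0 b := by
    apply ContinuousOn.intervalIntegrable
    rw [Set.uIcc_of_le hb0]
    exact hucOn.mul hfcont
  have hF'int : IntervalIntegrable (fun x => u' x * v x + u x * (x * u x)) volume 0 b :=
    hu'v_int.add hxuuint
  have hparts := intervalIntegral.integral_eq_sub_of_hasDerivAt_of_le hb0
    (hucOn.mul hvcont)
    (fun x hx => (hderiv x (Set.Ioo_subset_Icc_self hx)).mul (hvd x hx)) hF'int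
  rw [Pi.mul_apply, Pi.mul_apply, hvb, hv0] at hparts
  have hsplit := intervalIntegral.integral_add hu'v_int hxuuint
  have hIeq : (∫ x in (0:ℝ)..b, u x * (x * u x)) = I := by
    rw [hI]
    apply intervalIntegral.integral_congr
    intro x _
    ring
  have hu'vI : (∫ x in (0:ℝ)..b, u' x * v x) = -I := by
    rw [hsplit, hIeq] at hparts
    linarith [hparts]
  -- final estimate
  have hmono : -(∫ x in (0:ℝ)..b, u' x * v x) ≤ ∫ x in (0:ℝ)..b, g x := by
    rw [← intervalIntegral.integral_neg]
    apply intervalIntegral.integral_mono_on hb0 hu'v_int.neg hgint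
    intro x hx
    calc -(u' x * v x) ≤ |u' x * v x| := neg_le_abs _
      _ ≤ g x := hbound x hx
  have hgval : (∫ x in (0:ℝ)..b, g x) = c * J / 2 + I / (2 * c) * (b ^ 2 / 2) / 2 := by
    rw [hg]
    dsimp only
    rw [intervalIntegral.integral_div,
      intervalIntegral.integral_add (hu'2.const_mul c) hlin2,
      intervalIntegral.integral_const_mul, intervalIntegral.integral_const_mul, integral_id,
      ← hJ]
    ring
  rw [hu'vI, hgval] at hmono
  have e2 : I / (2 * c) * (b ^ 2 / 2) / 2 = I / 2 := by
    rw [hc]; field_simp; ring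
  have e1 : c * J / 2 = b ^ 2 / 8 * J := by rw [hc]; ring
  rw [e1, e2] at hmono
  have : I ≤ b ^ 2 / 4 * J := by linarith
  calc I ≤ b ^ 2 / 4 * J := this
    _ = c * J := by rw [hc]
end

section
/- Let α ∈ (0,1), M > 0, T > 0, and let φ : [0,T] → ℝ be nonnegative, absolutely continuous, with φ(0) = 0 and (ᶜD₀ₜ^α φ)(t) ≤ M·φ(t) for almost all t. Then φ ≡ 0 on [0,T]. -/
open MeasureTheory intervalIntegral

open Set

lemma kernel_ii {r : ℝ} (hr : -1 < r) (t a b : ℝ) :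
    IntervalIntegrable (fun τ => (t - τ) ^ r) volume a b := by
  simpa using (intervalIntegral.intervalIntegrable_rpow' (a := t - a) (b := t - b) hr).comp_sub_left t

lemma kernel_ii' {r : ℝ} (hr : -1 < r) (c a b : ℝ) :
    IntervalIntegrable (fun x => (x - c) ^ r) volume a b := by
  simpa using (intervalIntegral.intervalIntegrable_rpow' (a := a - c) (b := b - c) hr).comp_sub_right c

lemma kernel_int {α : ℝ} (hα0 : 0 < α) (hα1 : α < 1) (τ t : ℝ) :
    ∫ s in τ..t, (s - τ) ^ (-α) = (t - τ) ^ (1 - α) / (1 - α) := by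
  rw [intervalIntegral.integral_comp_sub_right (fun x => x ^ (-α)) τ, sub_self,
    integral_rpow (Or.inl (by linarith)),
    Real.zero_rpow (by linarith), sub_zero]
  ring_nf

lemma section_eval {α : ℝ} (hα0 : 0 < α) (hα1 : α < 1) {t : ℝ} (ht : 0 < t)
    (ψ : ℝ → ℝ) {τ : ℝ} (hτ : τ ∈ Set.Ioc (0:ℝ) t) :
    Integrable (fun s => if τ < s then ψ τ * (s - τ) ^ (-α) else 0)
      (volume.restrict (Set.Ioc (0:ℝ) t)) ∧
    ∫ s, (if τ < s then ψ τ * (s - τ) ^ (-α) else 0) ∂(volume.restrict (Set.Ioc (0:ℝ) t))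
      = ψ τ * ((t - τ) ^ (1 - α) / (1 - α)) := by
  have hfun : (fun s => if τ < s then ψ τ * (s - τ) ^ (-α) else 0)
      = Set.indicator (Set.Ioi τ) (fun s => ψ τ * (s - τ) ^ (-α)) := by
    funext s; by_cases h : τ < s <;> simp [Set.indicator, h]
  have hre : (volume.restrict (Set.Ioc (0:ℝ) t)).restrict (Set.Ioi τ)
      = volume.restrict (Set.Ioc τ t) := by
    rw [Measure.restrict_restrict measurableSet_Ioi]
    congr 1
    ext x
    simp only [Set.mem_inter_iff, Set.mem_Ioi, Set.mem_Ioc]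
    exact ⟨fun ⟨hx, _, hx2⟩ => ⟨hx, hx2⟩, fun ⟨hx1, hx2⟩ => ⟨hx1, hτ.1.trans hx1, hx2⟩⟩
  have hig : IntegrableOn (fun s => ψ τ * (s - τ) ^ (-α)) (Set.Ioc τ t) volume :=
    ((kernel_ii' (by linarith : (-1:ℝ) < -α) τ τ t).1).const_mul (ψ τ)
  constructor
  · rw [hfun, integrable_indicator_iff measurableSet_Ioi]
    show Integrable _ ((volume.restrict (Set.Ioc (0:ℝ) t)).restrict (Set.Ioi τ))
    rw [hre]; exact hig
  · rw [hfun, MeasureTheory.integral_indicator measurableSet_Ioi]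
    show ∫ s, _ ∂((volume.restrict (Set.Ioc (0:ℝ) t)).restrict (Set.Ioi τ)) = _
    rw [hre, ← intervalIntegral.integral_of_le hτ.2, intervalIntegral.integral_const_mul,
      kernel_int hα0 hα1]

lemma fubini_caputo {α : ℝ} (hα0 : 0 < α) (hα1 : α < 1) {t : ℝ} (ht : 0 < t)
    (φ' : ℝ → ℝ) (hint : IntegrableOn φ' (Set.Ioc 0 t) volume) :
    IntegrableOn (fun s => ∫ τ in (0:ℝ)..s, φ' τ * (s - τ) ^ (-α)) (Set.Ioc 0 t) volume ∧
    (∫ s in Set.Ioc (0:ℝ) t, (∫ τ in (0:ℝ)..s, φ' τ * (s - τ) ^ (-α)))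
      = (∫ τ in (0:ℝ)..t, φ' τ * (t - τ) ^ (1 - α)) / (1 - α) := by
  set μ := volume.restrict (Set.Ioc (0:ℝ) t) with hμ
  set F : ℝ × ℝ → ℝ := fun p => if p.2 < p.1 then φ' p.2 * (p.1 - p.2) ^ (-α) else 0 with hF_def
  have hψm : AEStronglyMeasurable φ' μ := hint.aestronglyMeasurable
  have hKm : Measurable (fun p : ℝ × ℝ => if p.2 < p.1 then (p.1 - p.2) ^ (-α) else 0) :=
    Measurable.ite (measurableSet_lt measurable_snd measurable_fst)
      ((measurable_fst.sub measurable_snd).pow measurable_const) measurable_const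
  have hmF : AEStronglyMeasurable F (μ.prod μ) := by
    have h1 : F = fun p => φ' p.2 * (if p.2 < p.1 then (p.1 - p.2) ^ (-α) else 0) := by
      funext p; by_cases h : p.2 < p.1 <;> simp [hF_def, h]
    rw [h1]
    exact hψm.comp_snd.mul hKm.aestronglyMeasurable
  have hnorm : ∀ τ : ℝ, (fun s => ‖F (s, τ)‖)
      = fun s => if τ < s then |φ' τ| * (s - τ) ^ (-α) else 0 := by
    intro τ; funext s
    by_cases h : τ < s
    · simp [hF_def, h, abs_mul, abs_of_nonneg (Real.rpow_nonneg (sub_nonneg.2 h.le) (-α))]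
    · simp [hF_def, h]
  have hF : Integrable F (μ.prod μ) := by
    rw [integrable_prod_iff' hmF]
    constructor
    · filter_upwards [ae_restrict_mem measurableSet_Ioc] with τ hτ
      exact (section_eval hα0 hα1 ht φ' hτ).1
    · refine Integrable.mono' (g := fun τ => |φ' τ| * (t ^ (1 - α) / (1 - α)))
        (hint.norm.mul_const _) (hmF.norm.prod_swap).integral_prod_right' ?_
      filter_upwards [ae_restrict_mem measurableSet_Ioc] with τ hτ
      have hval : ∫ s, ‖F (s, τ)‖ ∂μ = |φ' τ| * ((t - τ) ^ (1 - α) / (1 - α)) := by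
        rw [show (fun s => ‖F (s, τ)‖) = _ from hnorm τ]
        exact (section_eval hα0 hα1 ht (fun τ => |φ' τ|) hτ).2
      rw [Real.norm_eq_abs, hval, abs_of_nonneg (mul_nonneg (abs_nonneg _)
        (div_nonneg (Real.rpow_nonneg (by linarith [hτ.2]) _) (by linarith)))]
      have h1 : (t - τ) ^ (1 - α) ≤ t ^ (1 - α) :=
        Real.rpow_le_rpow (by linarith [hτ.2]) (by linarith [hτ.1]) (by linarith)
      gcongr
  have hswap := MeasureTheory.integral_integral_swap (μ := μ) (ν := μ)
    (f := fun s τ => F (s, τ)) hF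
  have hinner : ∀ s ∈ Set.Ioc (0:ℝ) t,
      (∫ τ, F (s, τ) ∂μ) = ∫ τ in (0:ℝ)..s, φ' τ * (s - τ) ^ (-α) := by
    intro s hs
    have h1 : (fun τ => F (s, τ)) = Set.indicator (Set.Iio s) (fun τ => φ' τ * (s - τ) ^ (-α)) := by
      funext τ; by_cases h : τ < s <;> simp [hF_def, h]
    rw [h1, MeasureTheory.integral_indicator measurableSet_Iio]
    show ∫ τ, _ ∂(μ.restrict (Set.Iio s)) = _
    have hre : μ.restrict (Set.Iio s) = volume.restrict (Set.Ioo 0 s) := by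
      rw [hμ, Measure.restrict_restrict measurableSet_Iio]
      congr 1; ext x
      simp only [Set.mem_inter_iff, Set.mem_Iio, Set.mem_Ioc, Set.mem_Ioo]
      exact ⟨fun ⟨ha, hb, _⟩ => ⟨hb, ha⟩, fun ⟨ha, hb⟩ => ⟨hb, ha, hb.le.trans hs.2⟩⟩
    rw [hre, ← MeasureTheory.integral_Ioc_eq_integral_Ioo,
      ← intervalIntegral.integral_of_le hs.1.le]
  constructor
  · exact (hF.integral_prod_left).congr
      ((ae_restrict_mem measurableSet_Ioc).mono fun s hs => hinner s hs)
  · calc (∫ s in Set.Ioc (0:ℝ) t, (∫ τ in (0:ℝ)..s, φ' τ * (s - τ) ^ (-α)))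
        = ∫ s, (∫ τ, F (s, τ) ∂μ) ∂μ := by
          refine integral_congr_ae ?_
          filter_upwards [ae_restrict_mem measurableSet_Ioc] with s hs
          exact (hinner s hs).symm
      _ = ∫ τ, (∫ s, F (s, τ) ∂μ) ∂μ := hswap
      _ = ∫ τ, φ' τ * ((t - τ) ^ (1 - α) / (1 - α)) ∂μ := by
          refine integral_congr_ae ?_
          filter_upwards [ae_restrict_mem measurableSet_Ioc] with τ hτ
          exact (section_eval hα0 hα1 ht φ' hτ).2
      _ = ∫ τ, (φ' τ * (t - τ) ^ (1 - α)) / (1 - α) ∂μ := by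
          simp_rw [mul_div_assoc]
      _ = (∫ τ, φ' τ * (t - τ) ^ (1 - α) ∂μ) / (1 - α) := MeasureTheory.integral_div _ _
      _ = (∫ τ in (0:ℝ)..t, φ' τ * (t - τ) ^ (1 - α)) / (1 - α) := by
          rw [intervalIntegral.integral_of_le ht.le]

lemma byparts {T α : ℝ} (hα0 : 0 < α) (hα1 : α < 1) {t : ℝ} (ht : 0 < t) (htT : t ≤ T)
    (φ φ' : ℝ → ℝ)
    (hderiv : ∀ u ∈ Set.Icc (0:ℝ) T, HasDerivAt φ (φ' u) u)
    (hint : IntervalIntegrable φ' volume 0 T)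
    (h0 : φ 0 = 0) :
    ∫ τ in (0:ℝ)..t, φ' τ * (t - τ) ^ (1 - α)
      = (1 - α) * ∫ τ in (0:ℝ)..t, φ τ * (t - τ) ^ (-α) := by
  have hφc : ContinuousOn φ (Set.Icc 0 T) := fun u hu =>
    (hderiv u hu).continuousAt.continuousWithinAt
  have hsub : Set.Icc (0:ℝ) t ⊆ Set.Icc (0:ℝ) T := Set.Icc_subset_Icc le_rfl htT
  have hg_cont : Continuous (fun τ : ℝ => (t - τ) ^ (1 - α)) :=
    (Real.continuous_rpow_const (by linarith)).comp (continuous_const.sub continuous_id)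
  set H : ℝ → ℝ := fun τ => φ τ * (t - τ) ^ (1 - α) with hH
  set A : ℝ → ℝ := fun τ => φ' τ * (t - τ) ^ (1 - α) with hA_def
  set B : ℝ → ℝ := fun τ => φ τ * (t - τ) ^ (-α) with hB_def
  have hder : ∀ τ ∈ Set.Ioo 0 t, HasDerivWithinAt H (A τ - (1 - α) * B τ) (Set.Ioi τ) τ := by
    intro τ hτ
    have h1 : HasDerivAt (fun x : ℝ => x ^ (1 - α)) ((1 - α) * (t - τ) ^ (-α)) (t - τ) := by
      have h := Real.hasDerivAt_rpow_const (x := t - τ) (p := 1 - α)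
        (Or.inl (by linarith [hτ.2] : t - τ ≠ 0))
      convert h using 2
      ring
    have h3 : HasDerivAt (fun τ : ℝ => t - τ) (-1) τ := (hasDerivAt_id τ).const_sub t
    have h2 : HasDerivAt (fun τ : ℝ => (t - τ) ^ (1 - α)) (-((1 - α) * (t - τ) ^ (-α))) τ := by
      convert h3.rpow_const (p := 1 - α) (Or.inl (by linarith [hτ.2] : t - τ ≠ 0)) using 1
      rw [show 1 - α - 1 = -α by ring]
      ring
    have h4 := (hderiv τ ⟨hτ.1.le, hτ.2.le.trans htT⟩).mul h2
    have h5 : HasDerivAt H (A τ - (1 - α) * B τ) τ := by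
      refine h4.congr_deriv ?_
      simp only [hA_def, hB_def]
      ring
    exact h5.hasDerivWithinAt
  have hcont : ContinuousOn H (Set.Icc 0 t) :=
    (hφc.mono hsub).mul hg_cont.continuousOn
  have hAi : IntervalIntegrable A volume 0 t := by
    refine IntervalIntegrable.mul_continuousOn ?_ hg_cont.continuousOn
    refine hint.mono_set ?_
    rw [Set.uIcc_of_le ht.le, Set.uIcc_of_le (ht.le.trans htT)]
    exact hsub
  have hBi : IntervalIntegrable B volume 0 t := by
    refine IntervalIntegrable.continuousOn_mul (kernel_ii (by linarith) t 0 t) ?_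
    rw [Set.uIcc_of_le ht.le]
    exact hφc.mono hsub
  have key := intervalIntegral.integral_eq_sub_of_hasDeriv_right_of_le ht.le hcont hder
    (hAi.sub (hBi.const_mul _))
  have hHt : H t = 0 := by simp [hH, Real.zero_rpow (by linarith : (1:ℝ) - α ≠ 0)]
  have hH0 : H 0 = 0 := by simp [hH, h0]
  rw [hHt, hH0, sub_zero, intervalIntegral.integral_sub hAi (hBi.const_mul _),
    intervalIntegral.integral_const_mul] at key
  linarith



/-- Caputo derivative of order `α ∈ (0,1)`. -/
noncomputable def caputoDeriv (α : ℝ) (w : ℝ → ℝ) (t : ℝ) : ℝ :=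
  (1 / Real.Gamma (1 - α)) * ∫ τ in (0:ℝ)..t, deriv w τ * (t - τ) ^ (-α)

/-- Degenerate fractional Gronwall lemma: if `φ` is nonnegative, absolutely continuous
on `[0,T]` with `φ(0) = 0` and `(ᶜD₀ₜ^α φ)(t) ≤ M φ(t)` for almost all `t`, where
`α ∈ (0,1)` and `M > 0`, then `φ ≡ 0` on `[0,T]`. -/
theorem fractional_gronwall_degenerate (T α M : ℝ) (hT : 0 < T) (hα0 : 0 < α)
    (hα1 : α < 1) (hM : 0 < M) (φ φ' : ℝ → ℝ)
    (hnonneg : ∀ t ∈ Set.Icc (0:ℝ) T, 0 ≤ φ t)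
    (hderiv : ∀ t ∈ Set.Icc (0:ℝ) T, HasDerivAt φ (φ' t) t)
    (hint : IntervalIntegrable φ' volume 0 T)
    (h0 : φ 0 = 0)
    (hineq : ∀ᵐ t ∂(volume.restrict (Set.Icc (0:ℝ) T)), caputoDeriv α φ t ≤ M * φ t) :
    ∀ t ∈ Set.Icc (0:ℝ) T, φ t = 0 := by
  have hΓ : 0 < Real.Gamma (1 - α) := Real.Gamma_pos_of_pos (by linarith)
  set κ := M * Real.Gamma (1 - α) with hκdef
  have hκ : 0 < κ := mul_pos hM hΓ
  have hφc : ContinuousOn φ (Set.Icc 0 T) := fun u hu =>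
    (hderiv u hu).continuousAt.continuousWithinAt
  -- The key integrated inequality
  have star : ∀ t : ℝ, 0 < t → t ≤ T →
      (∫ τ in (0:ℝ)..t, φ τ * (t - τ) ^ (-α)) ≤ κ * ∫ τ in (0:ℝ)..t, φ τ := by
    intro t ht htT
    have hsub : Set.Icc (0:ℝ) t ⊆ Set.Icc 0 T := Set.Icc_subset_Icc le_rfl htT
    have hint' : IntegrableOn φ' (Set.Ioc 0 t) volume :=
      hint.1.mono_set (Set.Ioc_subset_Ioc_right htT)
    obtain ⟨hfi, hfe⟩ := fubini_caputo hα0 hα1 ht φ' hint'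
    have hrep : ∀ s ∈ Set.Ioc (0:ℝ) t, caputoDeriv α φ s
        = (1 / Real.Gamma (1 - α)) * ∫ τ in (0:ℝ)..s, φ' τ * (s - τ) ^ (-α) := by
      intro s hs
      unfold caputoDeriv
      congr 1
      refine intervalIntegral.integral_congr ?_
      intro τ hτ
      rw [Set.uIcc_of_le hs.1.le] at hτ
      simp only [(hderiv τ ⟨hτ.1, hτ.2.trans (hs.2.trans htT)⟩).deriv]
    have hcapi : IntervalIntegrable (caputoDeriv α φ) volume 0 t := by
      rw [intervalIntegrable_iff_integrableOn_Ioc_of_le ht.le]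
      refine (hfi.const_mul (1 / Real.Gamma (1 - α))).congr ?_
      filter_upwards [ae_restrict_mem measurableSet_Ioc] with s hs
      exact (hrep s hs).symm
    have hφi : IntervalIntegrable φ volume 0 t := by
      apply ContinuousOn.intervalIntegrable
      rw [Set.uIcc_of_le ht.le]
      exact hφc.mono hsub
    have h1 : ∫ s in (0:ℝ)..t, caputoDeriv α φ s ≤ ∫ s in (0:ℝ)..t, M * φ s :=
      intervalIntegral.integral_mono_ae_restrict ht.le hcapi (hφi.const_mul M)
        (ae_restrict_of_ae_restrict_of_subset (Set.Icc_subset_Icc le_rfl htT) hineq)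
    have h2 : ∫ s in (0:ℝ)..t, caputoDeriv α φ s
        = (1 / Real.Gamma (1 - α)) * ∫ τ in (0:ℝ)..t, φ τ * (t - τ) ^ (-α) := by
      rw [intervalIntegral.integral_of_le ht.le]
      calc ∫ s in Set.Ioc (0:ℝ) t, caputoDeriv α φ s
          = ∫ s in Set.Ioc (0:ℝ) t,
              (1 / Real.Gamma (1 - α)) * ∫ τ in (0:ℝ)..s, φ' τ * (s - τ) ^ (-α) := by
            refine integral_congr_ae ?_
            filter_upwards [ae_restrict_mem measurableSet_Ioc] with s hs
            exact hrep s hs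
        _ = (1 / Real.Gamma (1 - α)) * ∫ s in Set.Ioc (0:ℝ) t,
              ∫ τ in (0:ℝ)..s, φ' τ * (s - τ) ^ (-α) := integral_const_mul _ _
        _ = (1 / Real.Gamma (1 - α)) *
              ((∫ τ in (0:ℝ)..t, φ' τ * (t - τ) ^ (1 - α)) / (1 - α)) := by rw [hfe]
        _ = (1 / Real.Gamma (1 - α)) *
              (((1 - α) * ∫ τ in (0:ℝ)..t, φ τ * (t - τ) ^ (-α)) / (1 - α)) := by
            rw [byparts hα0 hα1 ht htT φ φ' hderiv hint h0]
        _ = (1 / Real.Gamma (1 - α)) * ∫ τ in (0:ℝ)..t, φ τ * (t - τ) ^ (-α) := by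
            rw [mul_div_cancel_left₀ _ (by linarith : (1:ℝ) - α ≠ 0)]
    have h3 : ∫ s in (0:ℝ)..t, M * φ s = M * ∫ s in (0:ℝ)..t, φ s :=
      intervalIntegral.integral_const_mul _ _
    rw [h2, h3] at h1
    have h4 := mul_le_mul_of_nonneg_left h1 hΓ.le
    rw [← mul_assoc, ← mul_assoc, mul_one_div, div_self hΓ.ne', one_mul] at h4
    calc (∫ τ in (0:ℝ)..t, φ τ * (t - τ) ^ (-α))
        ≤ Real.Gamma (1 - α) * M * ∫ s in (0:ℝ)..t, φ s := h4
      _ = κ * ∫ τ in (0:ℝ)..t, φ τ := by rw [hκdef]; ring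
  -- the step size
  set δ := (2 * κ)⁻¹ ^ α⁻¹ with hδdef
  have hδ : 0 < δ := Real.rpow_pos_of_pos (by positivity) _
  have hδα : δ ^ α = (2 * κ)⁻¹ := by
    rw [hδdef, ← Real.rpow_mul (by positivity), inv_mul_cancel₀ hα0.ne', Real.rpow_one]
  -- zero propagation
  have step : ∀ t₀ t : ℝ, 0 ≤ t₀ → t₀ < t → t ≤ T → t - t₀ ≤ δ →
      (∀ u ∈ Set.Icc (0:ℝ) t₀, φ u = 0) → ∀ u ∈ Set.Icc (0:ℝ) t, φ u = 0 := by
    intro t₀ t ht₀ ht₀t htT hδt hzero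
    have ht : 0 < t := lt_of_le_of_lt ht₀ ht₀t
    have hsub : Set.Icc (0:ℝ) t ⊆ Set.Icc 0 T := Set.Icc_subset_Icc le_rfl htT
    have hφi1 : IntervalIntegrable φ volume 0 t₀ := by
      apply ContinuousOn.intervalIntegrable
      rw [Set.uIcc_of_le ht₀]
      exact hφc.mono (Set.Icc_subset_Icc le_rfl (ht₀t.le.trans htT))
    have hφi2 : IntervalIntegrable φ volume t₀ t := by
      apply ContinuousOn.intervalIntegrable
      rw [Set.uIcc_of_le ht₀t.le]
      exact hφc.mono (Set.Icc_subset_Icc ht₀ htT)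
    have hKi1 : IntervalIntegrable (fun τ => φ τ * (t - τ) ^ (-α)) volume 0 t₀ := by
      refine IntervalIntegrable.continuousOn_mul (kernel_ii (by linarith) t 0 t₀) ?_
      rw [Set.uIcc_of_le ht₀]
      exact hφc.mono (Set.Icc_subset_Icc le_rfl (ht₀t.le.trans htT))
    have hKi2 : IntervalIntegrable (fun τ => φ τ * (t - τ) ^ (-α)) volume t₀ t := by
      refine IntervalIntegrable.continuousOn_mul (kernel_ii (by linarith) t t₀ t) ?_
      rw [Set.uIcc_of_le ht₀t.le]
      exact hφc.mono (Set.Icc_subset_Icc ht₀ htT)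
    set F := ∫ τ in t₀..t, φ τ with hFdef
    have hF0 : 0 ≤ F :=
      intervalIntegral.integral_nonneg ht₀t.le
        (fun u hu => hnonneg u ⟨ht₀.trans hu.1, hu.2.trans htT⟩)
    have hzφ : ∫ τ in (0:ℝ)..t₀, φ τ = 0 := by
      have he : Set.EqOn φ 0 (Set.uIcc 0 t₀) := by
        intro u hu; rw [Set.uIcc_of_le ht₀] at hu; exact hzero u hu
      rw [intervalIntegral.integral_congr he]; simp
    have hzK : ∫ τ in (0:ℝ)..t₀, φ τ * (t - τ) ^ (-α) = 0 := by
      have he : Set.EqOn (fun τ => φ τ * (t - τ) ^ (-α)) 0 (Set.uIcc 0 t₀) := by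
        intro u hu; rw [Set.uIcc_of_le ht₀] at hu
        simp [hzero u hu]
      rw [intervalIntegral.integral_congr he]; simp
    have hsplitφ : ∫ τ in (0:ℝ)..t, φ τ = F := by
      rw [← intervalIntegral.integral_add_adjacent_intervals hφi1 hφi2, hzφ, zero_add]
    have hsplitK : ∫ τ in (0:ℝ)..t, φ τ * (t - τ) ^ (-α)
        = ∫ τ in t₀..t, φ τ * (t - τ) ^ (-α) := by
      rw [← intervalIntegral.integral_add_adjacent_intervals hKi1 hKi2, hzK, zero_add]
    have hmono : (t - t₀) ^ (-α) * F ≤ ∫ τ in t₀..t, φ τ * (t - τ) ^ (-α) := by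
      have heval : ∫ τ in t₀..t, φ τ * (t - t₀) ^ (-α) = (t - t₀) ^ (-α) * F := by
        rw [hFdef, ← intervalIntegral.integral_const_mul]
        congr 1; funext τ; ring
      rw [← heval]
      refine intervalIntegral.integral_mono_ae_restrict ht₀t.le (hφi2.mul_const _) hKi2 ?_
      have hne : ∀ᵐ τ ∂(volume.restrict (Set.Icc t₀ t)), τ ≠ t := by
        refine ae_restrict_of_ae ?_
        rw [ae_iff]
        have : {a : ℝ | ¬a ≠ t} = {t} := by ext a; simp
        rw [this]
        exact measure_singleton t
      filter_upwards [hne, ae_restrict_mem measurableSet_Icc] with τ hτne hτ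
      have hτt : τ < t := lt_of_le_of_ne hτ.2 hτne
      have hφτ : 0 ≤ φ τ := hnonneg τ ⟨ht₀.trans hτ.1, hτ.2.trans htT⟩
      have hrle : (t - t₀) ^ (-α) ≤ (t - τ) ^ (-α) :=
        Real.rpow_le_rpow_of_nonpos (by linarith) (by linarith [hτ.1]) (by linarith)
      calc φ τ * (t - t₀) ^ (-α) ≤ φ τ * (t - τ) ^ (-α) :=
            mul_le_mul_of_nonneg_left hrle hφτ
        _ = _ := rfl
    have hstar := star t ht htT
    rw [hsplitφ, hsplitK] at hstar
    have h2κ : 2 * κ ≤ (t - t₀) ^ (-α) := by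
      have h1 : (t - t₀) ^ α ≤ δ ^ α :=
        Real.rpow_le_rpow (by linarith) hδt hα0.le
      rw [hδα] at h1
      have h2 : 0 < (t - t₀) ^ α := Real.rpow_pos_of_pos (by linarith) _
      rw [Real.rpow_neg (by linarith : (0:ℝ) ≤ t - t₀)]
      calc 2 * κ = ((2 * κ)⁻¹)⁻¹ := by rw [inv_inv]
        _ ≤ ((t - t₀) ^ α)⁻¹ := by
            apply inv_anti₀ h2 h1
    have hchain : 2 * κ * F ≤ κ * F :=
      le_trans (mul_le_mul_of_nonneg_right h2κ hF0) (le_trans hmono hstar)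
    have hFeq : F = 0 := le_antisymm (by nlinarith) hF0
    have hzero2 : ∀ u ∈ Set.Icc t₀ t, φ u = 0 := by
      intro u hu
      by_contra hne2
      have hupos : 0 < φ u :=
        lt_of_le_of_ne (hnonneg u ⟨ht₀.trans hu.1, hu.2.trans htT⟩) (Ne.symm hne2)
      have hae : ∀ᵐ x ∂(volume.restrict (Set.Ioc t₀ t)), φ x = 0 := by
        have hempty : Set.Ioc t t₀ = ∅ := Set.Ioc_eq_empty (not_lt.mpr ht₀t.le)
        have hnn : 0 ≤ᵐ[volume.restrict (Set.Ioc t₀ t ∪ Set.Ioc t t₀)] φ := by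
          rw [hempty, Set.union_empty]
          filter_upwards [ae_restrict_mem measurableSet_Ioc] with τ hτ
          exact hnonneg τ ⟨ht₀.trans hτ.1.le, hτ.2.trans htT⟩
        have h5 := (intervalIntegral.integral_eq_zero_iff_of_nonneg_ae hnn hφi2).mp hFeq
        rw [hempty, Set.union_empty] at h5
        exact h5
      have hca : ContinuousAt φ u :=
        (hderiv u ⟨ht₀.trans hu.1, hu.2.trans htT⟩).continuousAt
      obtain ⟨ε, hε, hball⟩ := Metric.eventually_nhds_iff.mp
        (hca.eventually (eventually_gt_nhds (half_lt_self hupos)))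
      set a := max t₀ (u - ε) with ha_def
      set b := min t (u + ε) with hb_def
      have hab : a < b := by
        rw [ha_def, hb_def, lt_min_iff, max_lt_iff, max_lt_iff]
        exact ⟨⟨ht₀t, by linarith [hu.2]⟩, ⟨by linarith [hu.1], by linarith⟩⟩
      have hIsub : Set.Ioo a b ⊆ {x | ¬ φ x = 0} ∩ Set.Ioc t₀ t := by
        intro x hx
        have hax : u - ε < x := lt_of_le_of_lt (le_max_right _ _) hx.1
        have hxb : x < u + ε := lt_of_lt_of_le hx.2 (min_le_right _ _)
        have hdist : dist x u < ε := by
          rw [Real.dist_eq, abs_lt]; constructor <;> linarith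
        refine ⟨fun h => ?_, lt_of_le_of_lt (le_max_left _ _) hx.1,
          (hx.2.trans_le (min_le_left _ _)).le⟩
        have := hball hdist
        rw [h] at this
        linarith [half_pos hupos]
      have hnull : volume ({x | ¬ φ x = 0} ∩ Set.Ioc t₀ t) = 0 := by
        have h6 := hae
        rw [ae_iff, Measure.restrict_apply' measurableSet_Ioc] at h6
        exact h6
      have h7 : volume (Set.Ioo a b) = 0 := measure_mono_null hIsub hnull
      rw [Real.volume_Ioo, ENNReal.ofReal_eq_zero] at h7
      linarith
    intro u hu
    rcases le_total u t₀ with h | h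
    · exact hzero u ⟨hu.1, h⟩
    · exact hzero2 u ⟨h, hu.2⟩
  -- induction
  have main : ∀ n : ℕ, ∀ u ∈ Set.Icc (0:ℝ) (min ((n : ℝ) * δ) T), φ u = 0 := by
    intro n
    induction n with
    | zero =>
      intro u hu
      have h00 : min ((0:ℕ) * δ : ℝ) T = 0 := by simp [hT.le]
      rw [show ((0:ℕ) : ℝ) * δ = ((0:ℕ) * δ : ℝ) from by push_cast; ring] at hu
      rw [h00] at hu
      have : u = 0 := le_antisymm hu.2 hu.1
      rw [this]; exact h0
    | succ n ih =>
      by_cases hc : T ≤ (n : ℝ) * δ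
      · intro u hu
        apply ih
        rw [min_eq_right hc]
        rw [min_eq_right (le_trans hc (by push_cast; nlinarith))] at hu
        exact hu
      · push_neg at hc
        have ht₀eq : min ((n : ℝ) * δ) T = (n : ℝ) * δ := min_eq_left hc.le
        have hlt : (n : ℝ) * δ < min (((n:ℕ)+1 : ℝ) * δ) T := by
          apply lt_min _ hc
          nlinarith
        have hstep := step ((n : ℝ) * δ) (min (((n:ℕ)+1 : ℝ) * δ) T)
          (by positivity) hlt (min_le_right _ _)
          (by
            have := min_le_left (((n:ℕ)+1 : ℝ) * δ) T
            push_cast at this ⊢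
            nlinarith)
          (by rw [← ht₀eq]; exact ih)
        intro u hu
        apply hstep
        convert hu using 3
        push_cast
        ring
  intro t ht
  obtain ⟨n, hn⟩ := exists_nat_ge (T / δ)
  have hTn : T ≤ (n : ℝ) * δ := by
    rw [div_le_iff₀ hδ] at hn
    linarith
  have := main n t (by rw [min_eq_right hTn]; exact ht)
  exact this
end
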